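/- arXiv:1510.04229 — 2 statements merged into one kernel-verified Lean document; each statement's English description precedes it below -/
import Mathlib

section
/- Let $n \geq 1$ and let $G \subseteq S_n$ act on $A = (\mathbb{C}[t]/(t^2))^{\otimes n}$ (graded with $t$ in degree $2$) by permuting factors. The invariant algebra $A^G$ is isomorphic as a graded $\mathbb{C}$-algebra to $\mathbb{C}[s]/(s^{n+1})$ with $s$ in degree $2$ if and only if $G$ acts transitively on the set of $k$-element subsets of $\{1,\dots,n\}$ for every $1 \leq k \leq n$. -/
set_option maxHeartbeats 1000000
set_option synthInstance.maxHeartbeats 400000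

open MvPolynomial

/-- The ideal `(x₁², …, xₙ²)` in `ℂ[x₁,…,xₙ]`. -/
noncomputable def dualIdeal (n : ℕ) : Ideal (MvPolynomial (Fin n) ℂ) :=
  Ideal.span (Set.range fun i => (X i : MvPolynomial (Fin n) ℂ) ^ 2)

/-- `A n = (ℂ[t]/(t²))^{⊗ n} ≅ ℂ[x₁,…,xₙ]/(x₁²,…,xₙ²)`. -/
noncomputable abbrev DualPow (n : ℕ) : Type := MvPolynomial (Fin n) ℂ ⧸ dualIdeal n

/-- The basis element `t^I` (the class of `∏_{i ∈ I} xᵢ`). -/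
noncomputable def tI (n : ℕ) (I : Finset (Fin n)) : DualPow n :=
  Ideal.Quotient.mk (dualIdeal n) (∏ i ∈ I, X i)

/-- `s = ∑ tᵢ`. -/
noncomputable def sElem (n : ℕ) : DualPow n := ∑ i : Fin n, tI n {i}

/-- The action of a permutation on `A n`, permuting the factors. -/
noncomputable def permAlg (n : ℕ) (σ : Equiv.Perm (Fin n)) : DualPow n →ₐ[ℂ] DualPow n :=
  Ideal.quotientMapₐ (dualIdeal n) (rename (σ : Fin n → Fin n)) (by
    unfold dualIdeal
    rw [Ideal.span_le]
    rintro x ⟨i, rfl⟩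
    rw [SetLike.mem_coe, Ideal.mem_comap, map_pow, rename_X]
    exact Ideal.subset_span ⟨σ i, rfl⟩)

/-- The invariant subalgebra `A^G`. -/
noncomputable def invAlg (n : ℕ) (G : Subgroup (Equiv.Perm (Fin n))) : Subalgebra ℂ (DualPow n) :=
  ⨅ σ ∈ G, AlgHom.equalizer (permAlg n σ) (AlgHom.id ℂ (DualPow n))

/-- The invariant subspace as a submodule. -/
noncomputable def invSub (n : ℕ) (G : Subgroup (Equiv.Perm (Fin n))) : Submodule ℂ (DualPow n) :=
  ⨅ σ ∈ G, LinearMap.eqLocus (permAlg n σ).toLinearMap LinearMap.id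

/-- The degree-`d` homogeneous component of `A n` (where `t` has degree `2`):
spanned by the `t^I` with `2 ⬝ |I| = d`. -/
noncomputable def component (n d : ℕ) : Submodule ℂ (DualPow n) :=
  Submodule.span ℂ {x | ∃ I : Finset (Fin n), 2 * I.card = d ∧ x = tI n I}

/-- `ℂ[s]/(s^m)`. -/
noncomputable abbrev PolyQuot (m : ℕ) : Type :=
  Polynomial ℂ ⧸ Ideal.span {(Polynomial.X : Polynomial ℂ) ^ m}

namespace Aux2

noncomputable def expof (n : ℕ) (I : Finset (Fin n)) : Fin n →₀ ℕ := ∑ i ∈ I, Finsupp.single i 1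

lemma expof_apply (n : ℕ) (I : Finset (Fin n)) (j : Fin n) :
    expof n I j = if j ∈ I then 1 else 0 := by
  classical
  simp only [expof, Finsupp.finset_sum_apply, Finsupp.single_apply]
  simp [Finset.sum_ite_eq]

lemma prodX_eq (n : ℕ) (I : Finset (Fin n)) :
    (∏ i ∈ I, (X i : MvPolynomial (Fin n) ℂ)) = monomial (expof n I) 1 := by
  classical
  induction I using Finset.cons_induction with
  | empty => simp [expof]
  | cons a s ha ih =>
    rw [Finset.prod_cons, ih, X, monomial_mul, mul_one]
    congr 1
    rw [expof, expof, Finset.sum_cons]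

lemma coeff_expof_ideal (n : ℕ) (J : Finset (Fin n)) {p : MvPolynomial (Fin n) ℂ}
    (hp : p ∈ dualIdeal n) : coeff (expof n J) p = 0 := by
  rw [dualIdeal, Ideal.mem_span_range_iff_exists_fun] at hp
  obtain ⟨c, rfl⟩ := hp
  rw [coeff_sum]
  apply Finset.sum_eq_zero
  intro i _
  rw [X_pow_eq_monomial, coeff_mul_monomial', if_neg]
  intro h
  have h2 := h i
  simp [Finsupp.single_apply, expof_apply] at h2
  split at h2 <;> omega

noncomputable def coeffAt (n : ℕ) (J : Finset (Fin n)) : DualPow n →ₗ[ℂ] ℂ :=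
  (Submodule.liftQ ((dualIdeal n).restrictScalars ℂ) (lcoeff ℂ (expof n J))
      (fun p hp => coeff_expof_ideal n J hp)).comp
    (Submodule.Quotient.restrictScalarsEquiv ℂ (dualIdeal n)).symm.toLinearMap

lemma coeffAt_mk (n : ℕ) (J : Finset (Fin n)) (p : MvPolynomial (Fin n) ℂ) :
    coeffAt n J (Ideal.Quotient.mk (dualIdeal n) p) = coeff (expof n J) p := rfl

lemma expof_inj (n : ℕ) : Function.Injective (expof n) := by
  intro I J h
  ext j
  have h2 := congrArg (fun f => f j) h
  simp only [expof_apply] at h2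
  constructor <;> intro hj <;> by_contra hc <;> simp [hj, hc] at h2

lemma coeffAt_tI (n : ℕ) (J I : Finset (Fin n)) :
    coeffAt n J (tI n I) = if I = J then 1 else 0 := by
  rw [tI, coeffAt_mk, prodX_eq, coeff_monomial]
  by_cases h : I = J
  · simp [h]
  · rw [if_neg, if_neg h]
    exact fun hh => h (expof_inj n hh)

lemma tI_span (n : ℕ) : Submodule.span ℂ (Set.range (tI n)) = ⊤ := by
  classical
  rw [Submodule.eq_top_iff']
  intro x
  obtain ⟨p, rfl⟩ := Ideal.Quotient.mk_surjective x
  rw [p.as_sum, map_sum]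
  apply Submodule.sum_mem
  intro μ _
  set c := coeff μ p with hc
  by_cases h : ∀ i, μ i ≤ 1
  · have hμ : μ = expof n μ.support := by
      ext i
      rw [expof_apply]
      split
      · next hi => have h1 := Finsupp.mem_support_iff.mp hi; have h2 := h i; omega
      · next hi => simpa using Finsupp.notMem_support_iff.mp hi
    have : (monomial μ c : MvPolynomial (Fin n) ℂ) = c • monomial μ 1 := by
      rw [smul_monomial, smul_eq_mul, mul_one]
    rw [this, hμ, ← prodX_eq]
    have : Ideal.Quotient.mk (dualIdeal n) (c • ∏ i ∈ μ.support, X i)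
        = c • tI n μ.support := by
      rw [tI, ← Ideal.Quotient.mkₐ_eq_mk ℂ]
      exact map_smul _ c _
    rw [this]
    exact Submodule.smul_mem _ _ (Submodule.subset_span ⟨μ.support, rfl⟩)
  · push_neg at h
    obtain ⟨i, hi⟩ := h
    have hle : Finsupp.single i 2 ≤ μ := by
      rw [Finsupp.single_le_iff]; omega
    have : (monomial μ c : MvPolynomial (Fin n) ℂ)
        = monomial (μ - Finsupp.single i 2) c * X i ^ 2 := by
      rw [X_pow_eq_monomial, monomial_mul, mul_one, tsub_add_cancel_of_le hle]
    have hmem : (monomial μ c : MvPolynomial (Fin n) ℂ) ∈ dualIdeal n := by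
      rw [this]
      exact Ideal.mul_mem_left _ _ (Ideal.subset_span ⟨i, rfl⟩)
    rw [Ideal.Quotient.eq_zero_iff_mem.mpr hmem]
    exact Submodule.zero_mem _

lemma tI_linearIndependent (n : ℕ) : LinearIndependent ℂ (tI n) := by
  rw [Fintype.linearIndependent_iff]
  intro c hc I
  have h := congrArg (coeffAt n I) hc
  rw [map_sum, map_zero] at h
  simp only [map_smul, coeffAt_tI, smul_eq_mul, mul_ite, mul_one, mul_zero] at h
  rwa [Finset.sum_ite_eq' Finset.univ I c, if_pos (Finset.mem_univ I)] at h

noncomputable def bA (n : ℕ) : Module.Basis (Finset (Fin n)) ℂ (DualPow n) :=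
  Module.Basis.mk (tI_linearIndependent n) (by rw [tI_span])

lemma sum_coeffAt (n : ℕ) (x : DualPow n) : ∑ I, coeffAt n I x • tI n I = x := by
  have hx : x = ∑ I, (bA n).repr x I • tI n I := by
    conv_lhs => rw [← Module.Basis.sum_repr (bA n) x]
    simp [bA, Module.Basis.mk_apply]
  have hcr : ∀ J, coeffAt n J x = (bA n).repr x J := by
    intro J
    conv_lhs => rw [hx]
    rw [map_sum]
    simp only [map_smul, coeffAt_tI, smul_eq_mul, mul_ite, mul_one, mul_zero]
    rw [Finset.sum_ite_eq' Finset.univ J, if_pos (Finset.mem_univ J)]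
  simp_rw [hcr]
  exact hx.symm

lemma tI_mul (n : ℕ) {I J : Finset (Fin n)} (h : Disjoint I J) :
    tI n I * tI n J = tI n (I ∪ J) := by
  rw [tI, tI, tI, ← map_mul, ← Finset.prod_union h]

lemma tI_mul_of_mem (n : ℕ) {i : Fin n} {I : Finset (Fin n)} (h : i ∈ I) :
    tI n {i} * tI n I = 0 := by
  rw [tI, tI, ← map_mul, Ideal.Quotient.eq_zero_iff_mem, Finset.prod_singleton,
    ← Finset.mul_prod_erase I _ h, ← mul_assoc, ← sq]
  exact Ideal.mul_mem_right _ _ (Ideal.subset_span ⟨i, rfl⟩)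

lemma tI_singleton_mul (n : ℕ) (i : Fin n) (I : Finset (Fin n)) :
    tI n {i} * tI n I = if i ∈ I then 0 else tI n (insert i I) := by
  split
  · next h => exact tI_mul_of_mem n h
  · next h =>
    rw [tI_mul n (Finset.disjoint_singleton_left.mpr h)]
    rw [Finset.insert_eq]

noncomputable def eK (n k : ℕ) : DualPow n :=
  ∑ I ∈ Finset.powersetCard k Finset.univ, tI n I

lemma coeffAt_eK (n k : ℕ) (I : Finset (Fin n)) :
    coeffAt n I (eK n k) = if I.card = k then 1 else 0 := by
  rw [eK, map_sum]
  simp only [coeffAt_tI]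
  rw [Finset.sum_ite_eq' (Finset.powersetCard k Finset.univ) I (fun _ => (1:ℂ))]
  simp [Finset.mem_powersetCard_univ]

lemma eK_zero (n : ℕ) : eK n 0 = 1 := by
  rw [eK, Finset.powersetCard_zero]
  simp [tI]

lemma eK_of_gt (n k : ℕ) (h : n < k) : eK n k = 0 := by
  rw [eK, Finset.powersetCard_eq_empty.mpr (by simpa using h), Finset.sum_empty]

lemma s_mul_eK (n k : ℕ) : sElem n * eK n k = ((k : ℂ) + 1) • eK n (k + 1) := by
  classical
  have hL : sElem n * eK n k = ∑ p ∈ (Finset.univ ×ˢ Finset.powersetCard k Finset.univ).filter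
      (fun p : Fin n × Finset (Fin n) => p.1 ∉ p.2), tI n (insert p.1 p.2) := by
    rw [sElem, eK, Finset.sum_mul_sum, ← Finset.sum_product', Finset.sum_filter]
    apply Finset.sum_congr rfl
    intro p _
    rw [tI_singleton_mul, ite_not]
  have hR : ((k : ℂ) + 1) • eK n (k + 1)
      = ∑ q ∈ (Finset.powersetCard (k + 1) Finset.univ ×ˢ (Finset.univ : Finset (Fin n))).filter
          (fun q => q.2 ∈ q.1), tI n q.1 := by
    rw [Finset.sum_filter, Finset.sum_product, eK, Finset.smul_sum]
    apply Finset.sum_congr rfl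
    intro J hJ
    rw [Finset.sum_ite_mem, Finset.univ_inter]
    change _ = ∑ _i ∈ J, tI n J
    rw [Finset.sum_const, Finset.mem_powersetCard_univ.mp hJ, ← Nat.cast_smul_eq_nsmul ℂ]
    push_cast
    rfl
  rw [hL, hR]
  apply Finset.sum_bij' (i := fun (p : Fin n × Finset (Fin n)) (_ : p ∈ _) => (insert p.1 p.2, p.1))
    (j := fun (q : Finset (Fin n) × Fin n) (_ : q ∈ _) => (q.2, q.1.erase q.2))
  · intro p hp
    simp only [Finset.mem_filter, Finset.mem_product, Finset.mem_powersetCard_univ,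
      Finset.mem_univ, true_and, and_true] at hp ⊢
    exact ⟨by rw [Finset.card_insert_of_notMem hp.2, hp.1], Finset.mem_insert_self _ _⟩
  · intro q hq
    simp only [Finset.mem_filter, Finset.mem_product, Finset.mem_powersetCard_univ,
      Finset.mem_univ, true_and, and_true] at hq ⊢
    constructor
    · rw [Finset.card_erase_of_mem hq.2, hq.1]
      omega
    · exact Finset.notMem_erase _ _
  · intro p hp
    simp only [Finset.mem_filter, Finset.mem_product, Finset.mem_univ, true_and] at hp
    simp [Finset.erase_insert_of_ne, Finset.erase_insert hp.2]
  · intro q hq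
    simp only [Finset.mem_filter, Finset.mem_product, Finset.mem_univ, true_and] at hq
    simp [Finset.insert_erase hq.2]
  · intro p hp
    rfl

lemma s_pow (n k : ℕ) : sElem n ^ k = (k.factorial : ℂ) • eK n k := by
  induction k with
  | zero => simp [eK_zero]
  | succ k ih =>
    rw [pow_succ, ih, smul_mul_assoc, mul_comm, s_mul_eK, smul_smul, Nat.factorial_succ]
    push_cast
    ring_nf

lemma mem_invAlg_iff (n : ℕ) (G : Subgroup (Equiv.Perm (Fin n))) (x : DualPow n) :
    x ∈ invAlg n G ↔ ∀ σ ∈ G, permAlg n σ x = x := by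
  simp [invAlg, Algebra.mem_iInf, AlgHom.mem_equalizer]

lemma permAlg_tI (n : ℕ) (σ : Equiv.Perm (Fin n)) (I : Finset (Fin n)) :
    permAlg n σ (tI n I) = tI n (I.image σ) := by
  rw [tI, permAlg, Ideal.quotient_map_mkₐ, map_prod, tI]
  rw [Ideal.Quotient.mkₐ_eq_mk]
  congr 1
  rw [Finset.prod_image (fun a _ b _ h => σ.injective h)]
  simp [rename_X]

lemma permAlg_sElem (n : ℕ) (σ : Equiv.Perm (Fin n)) : permAlg n σ (sElem n) = sElem n := by
  rw [sElem, map_sum]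
  simp only [permAlg_tI, Finset.image_singleton]
  exact Equiv.sum_comp σ (fun j => tI n {j})

lemma coeffAt_invariant (n : ℕ) (σ : Equiv.Perm (Fin n)) (x : DualPow n)
    (h : permAlg n σ x = x) (J : Finset (Fin n)) :
    coeffAt n (J.image σ) x = coeffAt n J x := by
  classical
  conv_lhs => rw [← h, ← sum_coeffAt n x, map_sum]
  rw [map_sum]
  simp only [map_smul, permAlg_tI, coeffAt_tI, smul_eq_mul, mul_ite, mul_one, mul_zero]
  have himg : ∀ I : Finset (Fin n), (I.image σ = J.image σ) ↔ I = J := by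
    intro I
    exact ⟨fun hh => Finset.image_injective σ.injective hh, fun hh => by rw [hh]⟩
  simp_rw [himg]
  rw [Finset.sum_ite_eq' Finset.univ J, if_pos (Finset.mem_univ J)]

end Aux2

theorem statement2 (n : ℕ) (hn : 1 ≤ n) (G : Subgroup (Equiv.Perm (Fin n))) :
    (∃ e : PolyQuot (n + 1) ≃ₐ[ℂ] invAlg n G,
        ((e (Ideal.Quotient.mk _ Polynomial.X) : invAlg n G) : DualPow n) = sElem n)
    ↔ ∀ k : ℕ, 1 ≤ k → k ≤ n → ∀ I J : Finset (Fin n), I.card = k → J.card = k →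
        ∃ σ ∈ G, Finset.image (⇑σ) I = J := by
  classical
  constructor
  · rintro ⟨e, he⟩ k hk1 hk2 I₀ J₀ hI₀ hJ₀
    by_contra hcon
    push_neg at hcon
    set O : Finset (Finset (Fin n)) :=
      Finset.univ.filter (fun J => ∃ σ ∈ G, Finset.image (⇑σ) I₀ = J) with hO
    set x : DualPow n := ∑ J ∈ O, tI n J with hx
    have hxinv : x ∈ invAlg n G := by
      rw [Aux2.mem_invAlg_iff]
      intro τ hτ
      rw [hx, map_sum]
      simp only [Aux2.permAlg_tI]
      apply Finset.sum_bij' (i := fun (J : Finset (Fin n)) (_ : J ∈ O) => J.image (⇑τ))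
        (j := fun (J : Finset (Fin n)) (_ : J ∈ O) => J.image (⇑τ⁻¹))
      · intro J hJ
        simp only [hO, Finset.mem_filter, Finset.mem_univ, true_and] at hJ ⊢
        obtain ⟨σ, hσ, rfl⟩ := hJ
        refine ⟨τ * σ, G.mul_mem hτ hσ, ?_⟩
        rw [Finset.image_image]
        rfl
      · intro J hJ
        simp only [hO, Finset.mem_filter, Finset.mem_univ, true_and] at hJ ⊢
        obtain ⟨σ, hσ, rfl⟩ := hJ
        refine ⟨τ⁻¹ * σ, G.mul_mem (G.inv_mem hτ) hσ, ?_⟩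
        rw [Finset.image_image]
        rfl
      · intro J _
        rw [Finset.image_image]
        simp [Function.comp_def]
      · intro J _
        rw [Finset.image_image]
        simp [Function.comp_def]
      · intro J _
        rfl
    obtain ⟨qb, hq⟩ := e.surjective ⟨x, hxinv⟩
    obtain ⟨q, rfl⟩ := Ideal.Quotient.mk_surjective qb
    have hxe : x = Polynomial.aeval (sElem n) q := by
      set F : Polynomial ℂ →ₐ[ℂ] invAlg n G :=
        (e : PolyQuot (n+1) →ₐ[ℂ] invAlg n G).comp
          (Ideal.Quotient.mkₐ ℂ (Ideal.span {(Polynomial.X : Polynomial ℂ) ^ (n+1)})) with hF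
      have hFq : F q = ⟨x, hxinv⟩ := hq
      have hFX : ((F Polynomial.X : invAlg n G) : DualPow n) = sElem n := he
      have h1 : F q = Polynomial.aeval (F Polynomial.X) q := by
        conv_lhs => rw [← Polynomial.aeval_X_left_apply q]
        exact (Polynomial.aeval_algHom_apply F Polynomial.X q).symm
      have h2 : ((F q : invAlg n G) : DualPow n)
          = Polynomial.aeval ((F Polynomial.X : invAlg n G) : DualPow n) q := by
        rw [h1]
        exact (Polynomial.aeval_algHom_apply (invAlg n G).val (F Polynomial.X) q).symm
      rw [hFq, hFX] at h2
      exact h2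
    have hcoeff : Aux2.coeffAt n I₀ x = Aux2.coeffAt n J₀ x := by
      rw [hxe, Polynomial.aeval_eq_sum_range]
      rw [map_sum, map_sum]
      simp only [map_smul, Aux2.s_pow, map_smul, Aux2.coeffAt_eK, hI₀, hJ₀]
    have h1 : Aux2.coeffAt n I₀ x = 1 := by
      rw [hx, map_sum]
      simp only [Aux2.coeffAt_tI]
      rw [Finset.sum_ite_eq' O I₀ (fun _ => (1:ℂ)), if_pos]
      simp only [hO, Finset.mem_filter, Finset.mem_univ, true_and]
      exact ⟨1, G.one_mem, by simp⟩
    have h0 : Aux2.coeffAt n J₀ x = 0 := by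
      rw [hx, map_sum]
      simp only [Aux2.coeffAt_tI]
      rw [Finset.sum_ite_eq' O J₀ (fun _ => (1:ℂ)), if_neg]
      simp only [hO, Finset.mem_filter, Finset.mem_univ, true_and]
      rintro ⟨σ, hσ, hσI⟩
      exact hcon σ hσ hσI
    rw [h1, h0] at hcoeff
    exact one_ne_zero hcoeff
  · intro htrans
    have hs : sElem n ∈ invAlg n G := by
      rw [Aux2.mem_invAlg_iff]
      intro σ _
      exact Aux2.permAlg_sElem n σ
    set S : invAlg n G := ⟨sElem n, hs⟩ with hSdef
    set φ : Polynomial ℂ →ₐ[ℂ] invAlg n G := Polynomial.aeval S with hφ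
    have hSpow : S ^ (n + 1) = 0 := by
      apply Subtype.ext
      show ((S ^ (n+1) : invAlg n G) : DualPow n) = 0
      rw [SubmonoidClass.coe_pow]
      show sElem n ^ (n+1) = 0
      rw [Aux2.s_pow, Aux2.eK_of_gt n (n+1) (by omega), smul_zero]
    have hφ0 : ∀ a ∈ Ideal.span {(Polynomial.X : Polynomial ℂ) ^ (n+1)}, φ a = 0 := by
      intro a ha
      rw [Ideal.mem_span_singleton] at ha
      obtain ⟨c, rfl⟩ := ha
      rw [map_mul, map_pow, hφ, Polynomial.aeval_X, hSpow, zero_mul]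
    set ψ : PolyQuot (n+1) →ₐ[ℂ] invAlg n G :=
      Ideal.Quotient.liftₐ _ φ hφ0 with hψ
    have hψ_mk : ∀ p : Polynomial ℂ, ψ (Ideal.Quotient.mk _ p) = φ p := by
      intro p
      rw [hψ, Ideal.Quotient.liftₐ_apply]
      rfl
    have hφ_coe : ∀ p : Polynomial ℂ,
        ((φ p : invAlg n G) : DualPow n) = Polynomial.aeval (sElem n) p := by
      intro p
      rw [hφ]
      exact (Polynomial.aeval_algHom_apply (invAlg n G).val S p).symm
    -- injectivity
    have hinj : Function.Injective ψ := by
      rw [injective_iff_map_eq_zero]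
      intro a ha
      obtain ⟨p, rfl⟩ := Ideal.Quotient.mk_surjective a
      rw [hψ_mk] at ha
      have hmonic : (Polynomial.X ^ (n+1) : Polynomial ℂ).Monic := Polynomial.monic_X_pow _
      set r := p %ₘ (Polynomial.X ^ (n+1)) with hr
      have hdvd : Polynomial.X ^ (n+1) ∣ (p - r) := ⟨p /ₘ (Polynomial.X ^ (n+1)), by
        conv_lhs => rw [← Polynomial.modByMonic_add_div p (Polynomial.X ^ (n+1))]
        ring⟩
      have hφr : φ r = 0 := by
        obtain ⟨c, hc⟩ := hdvd
        have : r = p - Polynomial.X ^ (n+1) * c := by rw [← hc]; ring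
        rw [this, map_sub, ha, map_mul, map_pow, hφ, Polynomial.aeval_X, hSpow,
          zero_mul, sub_zero]
      have hdeg : r.natDegree < n + 1 := by
        have := Polynomial.natDegree_modByMonic_lt p hmonic (by
          intro h
          have := congrArg Polynomial.natDegree h
          simp [Polynomial.natDegree_X_pow] at this)
        simpa [Polynomial.natDegree_X_pow] using this
      have hcoe : Polynomial.aeval (sElem n) r = 0 := by
        rw [← hφ_coe, hφr]
        exact ZeroMemClass.coe_zero _
      rw [Polynomial.aeval_eq_sum_range' hdeg (sElem n)] at hcoe
      have hcz : ∀ j, j < n + 1 → r.coeff j = 0 := by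
        intro j hj
        obtain ⟨Ij, hIjsub, hIj⟩ := Finset.exists_subset_card_eq
          (s := (Finset.univ : Finset (Fin n))) (n := j) (by
            simp only [Finset.card_univ, Fintype.card_fin]; omega)
        have := congrArg (Aux2.coeffAt n Ij) hcoe
        rw [map_sum, map_zero] at this
        simp only [map_smul, Aux2.s_pow, map_smul, Aux2.coeffAt_eK, hIj] at this
        simp only [smul_eq_mul, mul_ite, mul_one, mul_zero, Finset.sum_ite_eq,
          Finset.mem_range] at this
        rw [if_pos hj] at this
        have hfac : ((j.factorial : ℂ)) ≠ 0 := Nat.cast_ne_zero.mpr (Nat.factorial_ne_zero j)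
        rcases mul_eq_zero.mp this with h | h
        · exact h
        · exact absurd h hfac
      have hrz : r = 0 := by
        ext j
        rw [Polynomial.coeff_zero]
        by_cases hj : j < n + 1
        · exact hcz j hj
        · exact Polynomial.coeff_eq_zero_of_natDegree_lt (by omega)
      rw [Ideal.Quotient.eq_zero_iff_mem, Ideal.mem_span_singleton]
      have hpr : p - r = p := by rw [hrz, sub_zero]
      rw [← hpr]
      exact hdvd
    -- surjectivity
    have hsurj : Function.Surjective ψ := by
      rintro ⟨x, hxG⟩
      have hxinv := (Aux2.mem_invAlg_iff n G x).mp hxG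
      have hconst : ∀ I J : Finset (Fin n), I.card = J.card →
          Aux2.coeffAt n I x = Aux2.coeffAt n J x := by
        intro I J hcard
        rcases Nat.eq_zero_or_pos I.card with h0 | hpos
        · have hI : I = ∅ := Finset.card_eq_zero.mp h0
          have hJ : J = ∅ := Finset.card_eq_zero.mp (by omega)
          rw [hI, hJ]
        · have hle : I.card ≤ n := by
            have := Finset.card_le_univ I
            simpa using this
          obtain ⟨σ, hσ, hσI⟩ := htrans I.card hpos hle I J rfl hcard.symm
          have h := Aux2.coeffAt_invariant n σ x (hxinv σ hσ) I
          rw [hσI] at h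
          exact h.symm
      have hpick : ∀ k : ℕ, k ≤ n → ∃ I : Finset (Fin n), I.card = k := by
        intro k hk
        obtain ⟨t, _, ht⟩ := Finset.exists_subset_card_eq
          (s := (Finset.univ : Finset (Fin n))) (n := k) (by
            simp only [Finset.card_univ, Fintype.card_fin]; omega)
        exact ⟨t, ht⟩
      set pk : ℕ → Finset (Fin n) := fun k =>
        if h : ∃ I : Finset (Fin n), I.card = k then h.choose else ∅ with hpk
      have hpkcard : ∀ k, k ≤ n → (pk k).card = k := by
        intro k hk
        rw [hpk]
        simp only
        rw [dif_pos (hpick k hk)]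
        exact (hpick k hk).choose_spec
      have hx_expand : x = ∑ k ∈ Finset.range (n+1),
          Aux2.coeffAt n (pk k) x • Aux2.eK n k := by
        conv_lhs => rw [← Aux2.sum_coeffAt n x]
        rw [show (Finset.univ : Finset (Finset (Fin n))) = Finset.univ.powerset from
          Finset.powerset_univ.symm, Finset.sum_powerset]
        rw [Finset.card_univ, Fintype.card_fin]
        apply Finset.sum_congr rfl
        intro k hk
        rw [Finset.mem_range] at hk
        rw [Aux2.eK, Finset.smul_sum]
        apply Finset.sum_congr rfl
        intro I hI
        congr 1
        exact hconst I (pk k) (by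
          rw [Finset.mem_powersetCard_univ.mp hI, hpkcard k (by omega)])
      refine ⟨Ideal.Quotient.mk _ (∑ k ∈ Finset.range (n+1),
        Polynomial.C (Aux2.coeffAt n (pk k) x / (k.factorial : ℂ)) * Polynomial.X ^ k), ?_⟩
      rw [hψ_mk]
      apply Subtype.ext
      rw [hφ_coe, map_sum]
      simp only [map_mul, map_pow, Polynomial.aeval_C, Polynomial.aeval_X]
      have hterm : ∀ k ∈ Finset.range (n+1),
          algebraMap ℂ (DualPow n) (Aux2.coeffAt n (pk k) x / (k.factorial : ℂ)) * sElem n ^ k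
          = Aux2.coeffAt n (pk k) x • Aux2.eK n k := by
        intro k _
        rw [Aux2.s_pow, ← Algebra.smul_def, smul_smul, div_mul_cancel₀]
        exact Nat.cast_ne_zero.mpr (Nat.factorial_ne_zero k)
      rw [Finset.sum_congr rfl hterm]
      exact hx_expand.symm
    refine ⟨AlgEquiv.ofBijective ψ ⟨hinj, hsurj⟩, ?_⟩
    show ((ψ (Ideal.Quotient.mk _ Polynomial.X) : invAlg n G) : DualPow n) = sElem n
    rw [hψ_mk, hφ_coe, Polynomial.aeval_X]
end

section
/- For $n \geq 1$, the $S_n$-invariant subalgebra of $(\mathbb{C}[t]/(t^2))^{\otimes n}$ (with the permutation action on factors and grading where $t$ has degree $2$) is isomorphic as a graded $\mathbb{C}$-algebra to $\mathbb{C}[s]/(s^{n+1})$ with $s$ homogeneous of degree $2$. -/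
open MvPolynomial

namespace Aux3
variable {n : ℕ}

/-- squarefree exponent vector of a finset -/
noncomputable def sqf (I : Finset (Fin n)) : Fin n →₀ ℕ := ∑ i ∈ I, Finsupp.single i 1

lemma sqf_apply (I : Finset (Fin n)) (i : Fin n) : sqf I i = if i ∈ I then 1 else 0 := by
  classical
  simp [sqf, Finsupp.finset_sum_apply, Finsupp.single_apply, Finset.sum_ite_eq' I i (fun _ => 1)]

lemma sqf_le_one (I : Finset (Fin n)) (i : Fin n) : sqf I i ≤ 1 := by
  rw [sqf_apply]; split <;> simp

lemma sqf_inj : Function.Injective (sqf (n := n)) := by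
  intro I J h
  ext i
  have := congrArg (fun f => f i) h
  simp only [sqf_apply] at this
  by_cases hI : i ∈ I <;> by_cases hJ : i ∈ J <;> simp_all

lemma prod_X_eq (I : Finset (Fin n)) :
    (∏ i ∈ I, X i : MvPolynomial (Fin n) ℂ) = monomial (sqf I) 1 := by
  classical
  induction I using Finset.induction with
  | empty => simp [sqf]
  | insert _ _ h ih =>
    rw [Finset.prod_insert h, ih, X, monomial_mul, one_mul]
    congr 1
    rw [sqf, sqf, Finset.sum_insert h]

lemma coeff_sqf_ideal {p : MvPolynomial (Fin n) ℂ} (hp : p ∈ dualIdeal n)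
    (I : Finset (Fin n)) : coeff (sqf I) p = 0 := by
  classical
  rw [dualIdeal, Ideal.mem_span_range_iff_exists_fun] at hp
  obtain ⟨c, rfl⟩ := hp
  rw [coeff_sum]
  refine Finset.sum_eq_zero fun i _ => ?_
  rw [X_pow_eq_monomial, coeff_mul_monomial']
  have : ¬ Finsupp.single i 2 ≤ sqf I := by
    intro h
    have := h i
    simp only [Finsupp.single_apply, if_pos rfl] at this
    exact absurd (le_trans this (sqf_le_one I i)) (by norm_num)
  simp [this]

/-- coefficient functional on the quotient -/
noncomputable def cf (I : Finset (Fin n)) : DualPow n →ₗ[ℂ] ℂ :=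
  (Submodule.liftQ ((dualIdeal n).restrictScalars ℂ) (lcoeff ℂ (sqf I))
      (fun p hp => coeff_sqf_ideal hp I)) ∘ₗ
    (Submodule.Quotient.restrictScalarsEquiv ℂ
      (dualIdeal n : Submodule (MvPolynomial (Fin n) ℂ) (MvPolynomial (Fin n) ℂ))).symm.toLinearMap

lemma cf_mk (I : Finset (Fin n)) (p : MvPolynomial (Fin n) ℂ) :
    cf I (Ideal.Quotient.mk (dualIdeal n) p) = coeff (sqf I) p := rfl

lemma cf_tI (I J : Finset (Fin n)) : cf I (tI n J) = if I = J then 1 else 0 := by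
  rw [tI, cf_mk, prod_X_eq, coeff_monomial]
  by_cases h : I = J
  · simp [h]
  · rw [if_neg h, if_neg (fun he => h (sqf_inj he).symm)]

lemma mk_monomial_eq (m : Fin n →₀ ℕ) (c : ℂ) :
    Ideal.Quotient.mk (dualIdeal n) (monomial m c)
      = ∑ I : Finset (Fin n), coeff (sqf I) (monomial m c) • tI n I := by
  classical
  by_cases hm : ∀ i, m i ≤ 1
  · have hms : sqf m.support = m := by
      ext i
      rw [sqf_apply]
      rcases Nat.le_one_iff_eq_zero_or_eq_one.mp (hm i) with h | h <;>
        simp [Finsupp.mem_support_iff, h]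
    have hco : ∀ I : Finset (Fin n),
        coeff (sqf I) (monomial m c) = if I = m.support then c else 0 := by
      intro I
      rw [coeff_monomial]
      by_cases h : I = m.support
      · simp [h, hms]
      · rw [if_neg (fun he => h (sqf_inj (hms.trans he)).symm), if_neg h]
    rw [Finset.sum_congr rfl fun I _ => by rw [hco I, ite_smul, zero_smul]]
    rw [Finset.sum_ite_eq' Finset.univ m.support (fun I => c • tI n I),
      if_pos (Finset.mem_univ _)]
    rw [tI, prod_X_eq, hms]
    rw [show (monomial m c : MvPolynomial (Fin n) ℂ) = c • monomial m 1 by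
      rw [smul_monomial, smul_eq_mul, mul_one]]
    exact map_smul (Ideal.Quotient.mkₐ ℂ (dualIdeal n)) c (monomial m 1)
  · push_neg at hm
    obtain ⟨i, hi⟩ := hm
    have hle : Finsupp.single i 2 ≤ m := by
      rw [Finsupp.single_le_iff]; exact hi
    have hmem : monomial m c ∈ dualIdeal n := by
      have : monomial m c
          = (X i : MvPolynomial (Fin n) ℂ) ^ 2 * monomial (m - Finsupp.single i 2) c := by
        rw [X_pow_eq_monomial, monomial_mul, one_mul, add_tsub_cancel_of_le hle]
      rw [this]
      exact Ideal.mul_mem_right _ _ (Ideal.subset_span ⟨i, rfl⟩)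
    rw [Ideal.Quotient.eq_zero_iff_mem.mpr hmem]
    refine (Finset.sum_eq_zero fun I _ => ?_).symm
    rw [coeff_monomial, if_neg, zero_smul]
    intro he
    have := congrArg (fun f => f i) he
    have h1 := sqf_le_one I i
    omega

lemma reconstruct (y : DualPow n) : y = ∑ I : Finset (Fin n), cf I y • tI n I := by
  classical
  obtain ⟨p, rfl⟩ := Ideal.Quotient.mk_surjective y
  simp only [cf_mk]
  conv_lhs => rw [p.as_sum, map_sum]
  rw [Finset.sum_congr rfl fun v _ => mk_monomial_eq v (coeff v p), Finset.sum_comm]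
  refine Finset.sum_congr rfl fun I _ => ?_
  rw [← Finset.sum_smul]
  congr 1
  rw [← coeff_sum, ← p.as_sum]

lemma cf_eq_zero_all {y : DualPow n} (h : ∀ I, cf I y = 0) : y = 0 := by
  rw [reconstruct y, Finset.sum_congr rfl fun I _ => by rw [h I, zero_smul]]
  exact Finset.sum_const_zero


variable {n : ℕ}

lemma permAlg_mk (σ : Equiv.Perm (Fin n)) (p : MvPolynomial (Fin n) ℂ) :
    permAlg n σ (Ideal.Quotient.mk (dualIdeal n) p)
      = Ideal.Quotient.mk (dualIdeal n) (rename (σ : Fin n → Fin n) p) := by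
  rfl

lemma permAlg_tI (σ : Equiv.Perm (Fin n)) (I : Finset (Fin n)) :
    permAlg n σ (tI n I) = tI n (I.image σ) := by
  rw [tI, permAlg_mk, map_prod]
  simp only [rename_X]
  rw [tI, Finset.prod_image (fun a _ b _ h => σ.injective h)]

lemma mem_invAlg_iff {x : DualPow n} :
    x ∈ invAlg n (⊤ : Subgroup (Equiv.Perm (Fin n))) ↔ ∀ σ, permAlg n σ x = x := by
  simp [invAlg, Algebra.mem_iInf, AlgHom.mem_equalizer]

lemma sElem_mem : sElem n ∈ invAlg n (⊤ : Subgroup (Equiv.Perm (Fin n))) := by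
  rw [mem_invAlg_iff]
  intro σ
  rw [sElem, map_sum]
  simp only [permAlg_tI, Finset.image_singleton]
  exact Fintype.sum_equiv σ _ _ (fun i => rfl)

/-- the symmetrized basis elements -/
noncomputable def pK (n k : ℕ) : DualPow n :=
  ∑ I ∈ Finset.univ.filter (fun I : Finset (Fin n) => I.card = k), tI n I

lemma cf_pK (I : Finset (Fin n)) (k : ℕ) :
    cf I (pK n k) = if I.card = k then 1 else 0 := by
  classical
  rw [pK, map_sum]
  simp only [cf_tI]
  rw [Finset.sum_ite_eq _ I (fun _ => (1:ℂ))]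
  simp [Finset.mem_filter]


variable {n : ℕ}

lemma cf_ext {x y : DualPow n} (h : ∀ I, cf I x = cf I y) : x = y := by
  have := cf_eq_zero_all (y := x - y) (fun I => by rw [map_sub, h I, sub_self])
  linear_combination (norm := abel) this

lemma tI_single_mul (i : Fin n) (I : Finset (Fin n)) :
    tI n {i} * tI n I = if i ∈ I then 0 else tI n (insert i I) := by
  classical
  rw [tI, tI, ← map_mul, Finset.prod_singleton]
  by_cases h : i ∈ I
  · rw [if_pos h]
    apply Ideal.Quotient.eq_zero_iff_mem.mpr
    rw [← Finset.mul_prod_erase I _ h, ← mul_assoc, ← sq]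
    exact Ideal.mul_mem_right _ _ (Ideal.subset_span ⟨i, rfl⟩)
  · rw [if_neg h, tI, Finset.prod_insert h]

lemma sElem_mul_pK (k : ℕ) : sElem n * pK n k = ((k : ℂ) + 1) • pK n (k + 1) := by
  classical
  refine cf_ext fun J => ?_
  rw [sElem, pK, Finset.sum_mul_sum]
  simp only [tI_single_mul]
  rw [map_sum]
  have inner : ∀ i : Fin n,
      cf J (∑ I ∈ Finset.univ.filter (fun I : Finset (Fin n) => I.card = k),
        if i ∈ I then 0 else tI n (insert i I))
      = if i ∈ J ∧ J.card = k + 1 then 1 else 0 := by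
    intro i
    rw [map_sum]
    by_cases hc : i ∈ J ∧ J.card = k + 1
    · have hmem : J.erase i ∈ Finset.univ.filter (fun I : Finset (Fin n) => I.card = k) := by
        simp [Finset.mem_filter, Finset.card_erase_of_mem hc.1, hc.2]
      have hzero : ∀ I ∈ Finset.univ.filter (fun I : Finset (Fin n) => I.card = k),
          I ≠ J.erase i → cf J (if i ∈ I then 0 else tI n (insert i I)) = 0 := by
        intro I hI hne
        by_cases hiI : i ∈ I
        · rw [if_pos hiI, map_zero]
        · rw [if_neg hiI, cf_tI, if_neg]
          intro he
          exact hne (by rw [he, Finset.erase_insert hiI])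
      rw [Finset.sum_eq_single_of_mem (J.erase i) hmem hzero, if_pos hc,
        if_neg (Finset.notMem_erase i J), cf_tI,
        if_pos (Finset.insert_erase hc.1).symm]
    · rw [if_neg hc]
      refine Finset.sum_eq_zero fun I hI => ?_
      by_cases hiI : i ∈ I
      · rw [if_pos hiI, map_zero]
      · rw [if_neg hiI, cf_tI, if_neg]
        intro he
        rw [Finset.mem_filter] at hI
        exact hc ⟨he ▸ Finset.mem_insert_self i I,
          by rw [he, Finset.card_insert_of_notMem hiI, hI.2]⟩
  rw [Finset.sum_congr rfl fun i _ => inner i, map_smul, cf_pK]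
  by_cases hJ : J.card = k + 1
  · simp only [hJ, and_true]
    rw [Finset.sum_ite_mem, Finset.univ_inter, Finset.sum_const, nsmul_eq_mul, mul_one,
      hJ]
    norm_num
  · rw [if_neg hJ, smul_zero]
    exact Finset.sum_eq_zero fun i _ => by simp [hJ]

lemma pK_zero : pK n 0 = 1 := by
  classical
  have : Finset.univ.filter (fun I : Finset (Fin n) => I.card = 0) = {∅} := by
    ext I; simp [Finset.card_eq_zero]
  rw [pK, this, Finset.sum_singleton, tI, Finset.prod_empty, map_one]

lemma sElem_pow (k : ℕ) : sElem n ^ k = (k.factorial : ℂ) • pK n k := by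
  induction k with
  | zero => simp [pK_zero]
  | succ k ih =>
    rw [pow_succ', ih, mul_smul_comm, sElem_mul_pK, smul_smul, Nat.factorial_succ]
    push_cast
    ring_nf

lemma pK_top : pK n (n + 1) = 0 := by
  classical
  rw [pK]
  refine Finset.sum_eq_zero fun I hI => ?_
  rw [Finset.mem_filter] at hI
  have := Finset.card_le_univ I
  simp [Finset.card_univ] at this
  omega

lemma sElem_pow_top : sElem n ^ (n + 1) = 0 := by
  rw [sElem_pow, pK_top, smul_zero]


variable {n : ℕ}

lemma cf_perm {x : DualPow n} (hx : ∀ σ, permAlg n σ x = x) (σ : Equiv.Perm (Fin n))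
    (K : Finset (Fin n)) : cf (K.image ⇑σ⁻¹) x = cf K x := by
  classical
  have hrec : x = ∑ I : Finset (Fin n), cf I x • tI n (I.image σ) := by
    conv_lhs => rw [← hx σ, reconstruct x, map_sum]
    exact Finset.sum_congr rfl fun I _ => by rw [map_smul, permAlg_tI]
  have h2 := congrArg (cf K) hrec
  rw [map_sum] at h2
  have h3 : ∀ I : Finset (Fin n), cf K (cf I x • tI n (I.image ⇑σ))
      = if I = K.image ⇑σ⁻¹ then cf (K.image ⇑σ⁻¹) x else 0 := by
    intro I
    rw [map_smul, cf_tI, smul_eq_mul]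
    by_cases h : I = K.image ⇑σ⁻¹
    · rw [if_pos h, if_pos, h, mul_one]
      rw [h, Finset.image_image]
      have : (⇑σ ∘ ⇑σ⁻¹) = id := by
        funext a; simp
      rw [this, Finset.image_id]
    · rw [if_neg h, if_neg, mul_zero]
      intro he
      apply h
      rw [he, Finset.image_image]
      have : (⇑σ⁻¹ ∘ ⇑σ) = id := by
        funext a; simp
      rw [this, Finset.image_id]
  rw [Finset.sum_congr rfl fun I _ => h3 I,
    Finset.sum_ite_eq' Finset.univ (K.image ⇑σ⁻¹) (fun _ => cf (K.image ⇑σ⁻¹) x),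
    if_pos (Finset.mem_univ _)] at h2
  exact h2.symm

lemma exists_perm_image {I J : Finset (Fin n)} (h : I.card = J.card) :
    ∃ σ : Equiv.Perm (Fin n), I.image ⇑σ = J := by
  classical
  let e : {x // x ∈ I} ≃ {x // x ∈ J} := Finset.equivOfCardEq h
  refine ⟨e.extendSubtype, ?_⟩
  have hsub : I.image ⇑e.extendSubtype ⊆ J := by
    intro x hx
    obtain ⟨a, ha, rfl⟩ := Finset.mem_image.mp hx
    exact e.extendSubtype_mem a ha
  refine Finset.eq_of_subset_of_card_le hsub ?_
  rw [Finset.card_image_of_injective _ e.extendSubtype.injective]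
  omega

lemma cf_card_eq {x : DualPow n} (hx : ∀ σ, permAlg n σ x = x) {I J : Finset (Fin n)}
    (h : I.card = J.card) : cf I x = cf J x := by
  classical
  obtain ⟨τ, hτ⟩ := exists_perm_image h.symm
  have := cf_perm hx τ⁻¹ J
  rw [inv_inv, hτ] at this
  exact this

/-- a canonical subset of each cardinality -/
noncomputable def canSet (n k : ℕ) : Finset (Fin n) :=
  if h : k ≤ n then
    (Finset.exists_subset_card_eq (s := (Finset.univ : Finset (Fin n)))
      (show k ≤ (Finset.univ : Finset (Fin n)).card by rw [Finset.card_univ, Fintype.card_fin]; exact h)).choose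
  else ∅

lemma canSet_card {k : ℕ} (h : k ≤ n) : (canSet n k).card = k := by
  rw [canSet, dif_pos h]
  exact (Finset.exists_subset_card_eq (s := (Finset.univ : Finset (Fin n)))
    (show k ≤ (Finset.univ : Finset (Fin n)).card by rw [Finset.card_univ, Fintype.card_fin]; exact h)).choose_spec.2

lemma card_le (I : Finset (Fin n)) : I.card ≤ n := by
  have := Finset.card_le_univ I
  rwa [Fintype.card_fin] at this

lemma inv_decomp {x : DualPow n} (hx : ∀ σ, permAlg n σ x = x) :
    x = ∑ k ∈ Finset.range (n + 1), cf (canSet n k) x • pK n k := by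
  classical
  conv_lhs => rw [reconstruct x]
  rw [← Finset.sum_fiberwise_of_maps_to
    (g := fun I : Finset (Fin n) => I.card) (t := Finset.range (n + 1))
    (fun I _ => Finset.mem_range.mpr (Nat.lt_succ_of_le (card_le I)))]
  refine Finset.sum_congr rfl fun k hk => ?_
  rw [pK, Finset.smul_sum]
  refine Finset.sum_congr rfl fun I hI => ?_
  rw [Finset.mem_filter] at hI
  congr 1
  exact cf_card_eq hx (by rw [hI.2, canSet_card (by rw [← hI.2]; exact card_le I)])

end Aux3

open Aux3 in
theorem statement3 (n : ℕ) (hn : 1 ≤ n) :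
    ∃ e : PolyQuot (n + 1) ≃ₐ[ℂ] invAlg n (⊤ : Subgroup (Equiv.Perm (Fin n))),
      ((e (Ideal.Quotient.mk _ Polynomial.X) :
          invAlg n (⊤ : Subgroup (Equiv.Perm (Fin n)))) : DualPow n) = sElem n := by
  classical
  have hs : sElem n ∈ invAlg n (⊤ : Subgroup (Equiv.Perm (Fin n))) := sElem_mem
  set T := invAlg n (⊤ : Subgroup (Equiv.Perm (Fin n))) with hT
  let sHat : T := ⟨sElem n, hs⟩
  let φ : Polynomial ℂ →ₐ[ℂ] T := Polynomial.aeval sHat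
  have hφcoe : ∀ p : Polynomial ℂ, ((φ p : T) : DualPow n) = Polynomial.aeval (sElem n) p :=
    fun p => (Polynomial.aeval_algHom_apply T.val sHat p).symm
  have hker : RingHom.ker φ = Ideal.span {(Polynomial.X : Polynomial ℂ) ^ (n + 1)} := by
    apply le_antisymm
    · intro p hp
      rw [RingHom.mem_ker] at hp
      have hps : Polynomial.aeval (sElem n) p = 0 := by
        rw [← hφcoe, hp]; rfl
      set q : Polynomial ℂ := Polynomial.X ^ (n + 1) with hq'
      have hq : q.Monic := Polynomial.monic_X_pow _
      have hr0 : Polynomial.aeval (sElem n) (p %ₘ q) = 0 := by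
        have hdiv := Polynomial.modByMonic_add_div p q
        have := congrArg (Polynomial.aeval (sElem n)) hdiv
        rw [map_add, map_mul, hps] at this
        have hq0 : Polynomial.aeval (sElem n) q = 0 := by
          rw [hq', map_pow, Polynomial.aeval_X, sElem_pow_top]
        rw [hq0, zero_mul, add_zero] at this
        exact this
      have hr : p %ₘ q = 0 := by
        by_contra hr
        have hdeg : (p %ₘ q).natDegree < n + 1 := by
          have := Polynomial.degree_modByMonic_lt p hq
          rw [hq', Polynomial.degree_X_pow] at this
          exact (Polynomial.natDegree_lt_iff_degree_lt hr).mpr this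
        have hsum : (0 : DualPow n) = ∑ k ∈ Finset.range (n + 1),
            (p %ₘ q).coeff k • ((k.factorial : ℂ) • pK n k) := by
          rw [← hr0, Polynomial.aeval_eq_sum_range' hdeg]
          exact Finset.sum_congr rfl fun k _ => by rw [sElem_pow]
        have hco : ∀ j : ℕ, j ≤ n → (p %ₘ q).coeff j = 0 := by
          intro j hj
          have := congrArg (cf (canSet n j)) hsum
          rw [map_zero, map_sum] at this
          have heval : ∀ k ∈ Finset.range (n + 1),
              cf (canSet n j) ((p %ₘ q).coeff k • ((k.factorial : ℂ) • pK n k))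
              = if k = j then (p %ₘ q).coeff k * k.factorial else 0 := by
            intro k _
            rw [map_smul, map_smul, cf_pK, canSet_card hj, smul_eq_mul, smul_eq_mul]
            by_cases h : k = j
            · rw [if_pos h, if_pos h.symm, mul_one]
            · rw [if_neg h, if_neg (fun hh => h hh.symm), mul_zero, mul_zero]
          rw [Finset.sum_congr rfl heval,
            Finset.sum_ite_eq' (Finset.range (n + 1)) j
              (fun k => (p %ₘ q).coeff k * k.factorial),
            if_pos (Finset.mem_range.mpr (Nat.lt_succ_of_le hj))] at this
          have hfac : ((j.factorial : ℂ)) ≠ 0 :=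
            Nat.cast_ne_zero.mpr j.factorial_ne_zero
          rcases mul_eq_zero.mp this.symm with h | h
          · exact h
          · exact absurd h hfac
        apply hr
        ext j
        by_cases hj : j ≤ n
        · rw [hco j hj, Polynomial.coeff_zero]
        · rw [Polynomial.coeff_eq_zero_of_natDegree_lt (lt_of_lt_of_le hdeg (by omega)),
            Polynomial.coeff_zero]
      rw [Ideal.mem_span_singleton]
      exact (Polynomial.modByMonic_eq_zero_iff_dvd hq).mp hr
    · rw [Ideal.span_le, Set.singleton_subset_iff, SetLike.mem_coe, RingHom.mem_ker]
      apply Subtype.ext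
      show ((φ (Polynomial.X ^ (n + 1)) : T) : DualPow n) = ((0 : T) : DualPow n)
      rw [hφcoe, map_pow, Polynomial.aeval_X, sElem_pow_top]
      rfl
  have hsurj : Function.Surjective φ := by
    rintro ⟨y, hy⟩
    have hy' : ∀ σ, permAlg n σ y = y := mem_invAlg_iff.mp hy
    set c : ℕ → ℂ := fun k => cf (canSet n k) y with hc
    refine ⟨∑ k ∈ Finset.range (n + 1),
      Polynomial.C (c k / k.factorial) * Polynomial.X ^ k, ?_⟩
    apply Subtype.ext
    rw [hφcoe, map_sum]
    have heval : ∀ k ∈ Finset.range (n + 1),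
        Polynomial.aeval (sElem n) (Polynomial.C (c k / k.factorial) * Polynomial.X ^ k)
        = c k • pK n k := by
      intro k _
      rw [map_mul, map_pow, Polynomial.aeval_X, Polynomial.aeval_C, sElem_pow,
        ← Algebra.smul_def, smul_smul, div_mul_cancel₀ _
          (Nat.cast_ne_zero.mpr k.factorial_ne_zero)]
    rw [Finset.sum_congr rfl heval]
    exact (inv_decomp hy').symm
  refine ⟨(Ideal.quotientEquivAlgOfEq ℂ hker.symm).trans
    (Ideal.quotientKerAlgEquivOfSurjective hsurj), ?_⟩
  have h1 : ((Ideal.quotientEquivAlgOfEq ℂ hker.symm).trans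
      (Ideal.quotientKerAlgEquivOfSurjective hsurj))
      (Ideal.Quotient.mk _ Polynomial.X) = φ Polynomial.X := by
    rw [AlgEquiv.trans_apply, Ideal.quotientEquivAlgOfEq_mk]
    exact Ideal.kerLiftAlg_mk φ Polynomial.X
  rw [h1, hφcoe, Polynomial.aeval_X]
end
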